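/- arXiv:1105.2652 — 3 statements merged into one kernel-verified Lean document; each statement's English description precedes it below -/
import Mathlib

section
/- Suppose (C1)–(C2) hold and p_1,…,p_d : [0,∞) → [0,∞) are continuous. Let z : [0,∞) → [0,∞) be nondecreasing with z(0) > 0 and satisfying z(r) = z(0) + ∫₀^r t^{1-N} ∫₀^t s^{N-1} (Σ_{i=1}^d p_i(s)) (Σ_{i=1}^d f_i(z(s),…,z(s))) ds dt for all r ≥ 0. Choose β₁ ∈ (0, z(0)] and define u_i^0 ≡ β₁ and u_i^k(r) = β₁ + ∫₀^r t^{1-N} ∫₀^t s^{N-1} p_i(s) f_i(u_1^{k-1}(s),…,u_d^{k-1}(s)) ds dt for k ≥ 1. Then u_i^k(r) ≤ z(r) for all i = 1,…,d, all k ≥ 0, and all r ≥ 0. -/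
open MeasureTheory Set Filter

theorem stmt13
    (N d : ℕ) (hN : 3 ≤ N) (hd : 1 ≤ d)
    (f : Fin d → (Fin d → ℝ) → ℝ)
    -- (C1)
    (hf_nonneg : ∀ j v, (∀ i, 0 ≤ v i) → 0 ≤ f j v)
    (hC1 : ∀ j, ContDiffOn ℝ 1 (f j) {v : Fin d → ℝ | ∀ i, 0 ≤ v i})
    (hf0 : ∀ j, f j (fun _ => 0) = 0)
    (hfpos : ∀ j v, (∀ i, 0 ≤ v i) → (∃ i, 0 < v i) → 0 < f j v)
    -- (C2)
    (hC2 : ∀ j v w, (∀ i, 0 ≤ v i) → (∀ i, v i ≤ w i) → f j v ≤ f j w)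
    -- continuous nonnegative coefficients p₁,…,p_d
    (p : Fin d → ℝ → ℝ)
    (hp_cont : ∀ i, ContinuousOn (p i) (Ici 0))
    (hp_nonneg : ∀ i, ∀ t ≥ (0:ℝ), 0 ≤ p i t)
    -- the nondecreasing function z with z(0) > 0 solving the integral equation
    (z : ℝ → ℝ)
    (hz_mono : MonotoneOn z (Ici 0))
    (hz0 : 0 < z 0)
    (hz : ∀ r ≥ (0:ℝ),
      z r = z 0 +
        ∫ t in (0:ℝ)..r,
          (∫ s in (0:ℝ)..t,
            s ^ (N - 1) * ((∑ i, p i s) * (∑ i, f i (fun _ => z s)))) / t ^ (N - 1))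
    -- β₁ ∈ (0, z(0)]
    (β₁ : ℝ) (hβ₁ : 0 < β₁ ∧ β₁ ≤ z 0)
    -- the successive approximations
    (u : ℕ → Fin d → ℝ → ℝ)
    (hu0 : ∀ i r, u 0 i r = β₁)
    (huk : ∀ k i r, 0 ≤ r →
      u (k + 1) i r = β₁ +
        ∫ t in (0:ℝ)..r,
          (∫ s in (0:ℝ)..t, s ^ (N - 1) * (p i s * f i (fun j => u k j s))) / t ^ (N - 1)) :
    -- conclusion
    ∀ k i, ∀ r ≥ (0:ℝ), u k i r ≤ z r := by
  obtain ⟨hβpos, hβle⟩ := hβ₁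
  -- z is nonnegative / ≥ z 0 on [0,∞)
  have hz_lb : ∀ r : ℝ, 0 ≤ r → z 0 ≤ z r := fun r hr =>
    hz_mono (self_mem_Ici) hr hr
  have hz_nonneg : ∀ r : ℝ, 0 ≤ r → 0 ≤ z r := fun r hr => le_trans hz0.le (hz_lb r hr)
  -- lower bound for u
  have hu_lb : ∀ k i r, 0 ≤ r → β₁ ≤ u k i r := by
    intro k
    induction k with
    | zero => intro i r hr; rw [hu0]
    | succ k ih =>
      intro i r hr
      rw [huk k i r hr]
      have h0 : (0:ℝ) ≤ ∫ t in (0:ℝ)..r,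
          (∫ s in (0:ℝ)..t, s ^ (N - 1) * (p i s * f i (fun j => u k j s))) / t ^ (N - 1) := by
        apply intervalIntegral.integral_nonneg hr
        intro t ht
        apply div_nonneg _ (pow_nonneg ht.1 _)
        apply intervalIntegral.integral_nonneg ht.1
        intro s hs
        exact mul_nonneg (pow_nonneg hs.1 _)
          (mul_nonneg (hp_nonneg i s hs.1)
            (hf_nonneg i _ (fun j => le_trans hβpos.le (ih j s hs.1))))
      linarith
  have hu_nonneg : ∀ k i r, 0 ≤ r → (0:ℝ) ≤ u k i r := fun k i r hr =>
    le_trans hβpos.le (hu_lb k i r hr)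
  -- the modified z, monotone on all of ℝ
  set z' : ℝ → ℝ := fun s => z (max s 0) with hz'def
  have hz'_mono : Monotone z' := fun a b hab =>
    hz_mono (le_max_right a 0) (le_max_right b 0) (max_le_max hab le_rfl)
  have hz'_eq : ∀ s : ℝ, 0 ≤ s → z' s = z s := fun s hs => by
    simp [hz'def, max_eq_left hs]
  have hz'_nonneg : ∀ s : ℝ, 0 ≤ z' s := fun s => hz_nonneg _ (le_max_right s 0)
  -- F : sum of f j at constant vector z'
  set F : ℝ → ℝ := fun s => ∑ j, f j (fun _ => z' s) with hFdef
  have hF_mono : Monotone F := by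
    intro a b hab
    apply Finset.sum_le_sum
    intro j _
    exact hC2 j _ _ (fun _ => hz'_nonneg a) (fun _ => hz'_mono hab)
  -- P : sum of the p i
  set P : ℝ → ℝ := fun s => ∑ i, p i s with hPdef
  have hP_cont : ContinuousOn P (Ici 0) := continuousOn_finset_sum _ (fun i _ => hp_cont i)
  have hP_nonneg : ∀ s : ℝ, 0 ≤ s → 0 ≤ P s := fun s hs =>
    Finset.sum_nonneg (fun i _ => hp_nonneg i s hs)
  -- the big integrand
  set Big : ℝ → ℝ := fun s => s ^ (N - 1) * (P s * (∑ i, f i (fun _ => z s))) with hBigdef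
  have hBig_nonneg : ∀ s : ℝ, 0 ≤ s → 0 ≤ Big s := by
    intro s hs
    exact mul_nonneg (pow_nonneg hs _) (mul_nonneg (hP_nonneg s hs)
      (Finset.sum_nonneg fun j _ => hf_nonneg j _ (fun _ => hz_nonneg s hs)))
  -- Big is interval integrable on [0, r] for any r ≥ 0
  have hBig_int : ∀ r : ℝ, 0 ≤ r → IntegrableOn Big (Icc 0 r) := by
    intro r hr
    have h1 : IntervalIntegrable F volume 0 r := hF_mono.intervalIntegrable
    have h2 : ContinuousOn (fun s : ℝ => s ^ (N - 1) * P s) (uIcc 0 r) := by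
      apply ContinuousOn.mul ((continuous_pow (N-1)).continuousOn)
      apply hP_cont.mono
      rw [uIcc_of_le hr]
      exact Icc_subset_Ici_self
    have h3 : IntervalIntegrable (fun s => (s ^ (N - 1) * P s) * F s) volume 0 r :=
      h1.continuousOn_mul h2
    have h4 : IntegrableOn (fun s => (s ^ (N - 1) * P s) * F s) (Icc 0 r) := by
      rw [integrableOn_Icc_iff_integrableOn_Ioc]
      exact (intervalIntegrable_iff_integrableOn_Ioc_of_le hr).mp h3
    apply h4.congr_fun _ measurableSet_Icc
    intro s hs
    simp only [hBigdef, hFdef]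
    rw [hz'_eq s hs.1]
    ring
  -- main induction
  intro k
  induction k with
  | zero =>
    intro i r hr
    rw [hu0]
    exact le_trans hβle (hz_lb r hr)
  | succ k ih =>
    intro i r hr
    -- the bound constant C on [0, r]
    obtain ⟨s₀, hs₀mem, hs₀⟩ := isCompact_Icc.exists_isMaxOn (nonempty_Icc.mpr hr)
      (hP_cont.mono (Icc_subset_Ici_self (a := r) (b := 0)))
    set C : ℝ := P s₀ * (∑ j, f j (fun _ => z r)) with hCdef
    have hC_nonneg : 0 ≤ C := mul_nonneg (hP_nonneg s₀ hs₀mem.1)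
      (Finset.sum_nonneg fun j _ => hf_nonneg j _ fun _ => hz_nonneg r hr)
    have hBig_le : ∀ t ∈ Icc (0:ℝ) r, ∀ s ∈ Icc (0:ℝ) t, Big s ≤ C * t ^ (N - 1) := by
      intro t ht s hs
      have hs0 : 0 ≤ s := hs.1
      have hsr : s ≤ r := le_trans hs.2 ht.2
      have h1 : P s ≤ P s₀ := hs₀ ⟨hs0, hsr⟩
      have h2 : (∑ j, f j (fun _ => z s)) ≤ ∑ j, f j (fun _ => z r) :=
        Finset.sum_le_sum fun j _ => hC2 j _ _ (fun _ => hz_nonneg s hs0)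
          (fun _ => hz_mono hs0 hr hsr)
      have h3 : (0:ℝ) ≤ ∑ j, f j (fun _ => z s) :=
        Finset.sum_nonneg fun j _ => hf_nonneg j _ fun _ => hz_nonneg s hs0
      calc Big s = s ^ (N - 1) * (P s * ∑ j, f j (fun _ => z s)) := rfl
        _ ≤ t ^ (N - 1) * (P s₀ * ∑ j, f j (fun _ => z r)) := by
            apply mul_le_mul (pow_le_pow_left₀ hs0 hs.2 _)
              (mul_le_mul h1 h2 h3 (hP_nonneg s₀ hs₀mem.1))
              (mul_nonneg (hP_nonneg s hs0) h3) (pow_nonneg ht.1 _)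
        _ = C * t ^ (N - 1) := by rw [hCdef]; ring
    have hInner_le : ∀ t ∈ Icc (0:ℝ) r, (∫ s in (0:ℝ)..t, Big s) ≤ C * t ^ (N - 1) * t := by
      intro t ht
      have hii : IntervalIntegrable Big volume 0 t := by
        apply IntegrableOn.intervalIntegrable
        rw [uIcc_of_le ht.1]
        exact (hBig_int r hr).mono_set (Icc_subset_Icc_right ht.2)
      calc (∫ s in (0:ℝ)..t, Big s) ≤ ∫ s in (0:ℝ)..t, (C * t ^ (N - 1) : ℝ) :=
            intervalIntegral.integral_mono_on ht.1 hii intervalIntegrable_const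
              (fun s hs => hBig_le t ht s hs)
        _ = C * t ^ (N - 1) * t := by
            rw [intervalIntegral.integral_const, smul_eq_mul]; ring
    have hH_nonneg : ∀ t : ℝ, 0 ≤ t → 0 ≤ (∫ s in (0:ℝ)..t, Big s) / t ^ (N - 1) := by
      intro t ht
      apply div_nonneg _ (pow_nonneg ht _)
      apply intervalIntegral.integral_nonneg ht
      intro s hs
      exact hBig_nonneg s hs.1
    have hH_int : IntegrableOn (fun t => (∫ s in (0:ℝ)..t, Big s) / t ^ (N - 1)) (Icc 0 r) := by
      have hprim : ContinuousOn (fun t : ℝ => ∫ s in (0:ℝ)..t, Big s) (Icc 0 r) := by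
        have := intervalIntegral.continuousOn_primitive_interval
          (a := 0) (b := r) (μ := volume) (f := Big) (by rw [uIcc_of_le hr]; exact hBig_int r hr)
        rwa [uIcc_of_le hr] at this
      have hmeas : AEStronglyMeasurable (fun t => (∫ s in (0:ℝ)..t, Big s) / t ^ (N - 1))
          (volume.restrict (Icc (0:ℝ) r)) := by
        simp only [div_eq_mul_inv]
        exact (hprim.aestronglyMeasurable measurableSet_Icc).mul
          ((measurable_id.pow_const (N - 1)).inv.aestronglyMeasurable)
      apply Integrable.mono' (g := fun _ => C * r)
        (integrableOn_const measure_Icc_lt_top.ne) hmeas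
      apply (ae_restrict_iff' measurableSet_Icc).2 (ae_of_all _ _)
      intro t ht
      rw [Real.norm_eq_abs, abs_of_nonneg (hH_nonneg t ht.1)]
      rcases eq_or_lt_of_le ht.1 with h0 | h0
      · rw [← h0]
        simp only [intervalIntegral.integral_same, zero_div]
        exact mul_nonneg hC_nonneg hr
      · rw [div_le_iff₀ (pow_pos h0 _)]
        have h4 := mul_le_mul_of_nonneg_left ht.2 (mul_nonneg hC_nonneg (pow_nonneg ht.1 (N - 1)))
        calc (∫ s in (0:ℝ)..t, Big s) ≤ C * t ^ (N - 1) * t := hInner_le t ht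
          _ ≤ C * r * t ^ (N - 1) := by nlinarith
    -- the key comparison of the outer integrals
    have key : (∫ t in (0:ℝ)..r,
          (∫ s in (0:ℝ)..t, s ^ (N - 1) * (p i s * f i (fun j => u k j s))) / t ^ (N - 1))
        ≤ ∫ t in (0:ℝ)..r, (∫ s in (0:ℝ)..t, Big s) / t ^ (N - 1) := by
      rw [intervalIntegral.integral_of_le hr, intervalIntegral.integral_of_le hr]
      apply integral_mono_of_nonneg
      · apply (ae_restrict_iff' measurableSet_Ioc).2 (ae_of_all _ _)
        intro t ht
        apply div_nonneg _ (pow_nonneg ht.1.le _)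
        apply intervalIntegral.integral_nonneg ht.1.le
        intro s hs
        exact mul_nonneg (pow_nonneg hs.1 _)
          (mul_nonneg (hp_nonneg i s hs.1) (hf_nonneg i _ fun j => hu_nonneg k j s hs.1))
      · exact hH_int.mono_set Ioc_subset_Icc_self
      · apply (ae_restrict_iff' measurableSet_Ioc).2 (ae_of_all _ _)
        intro t ht
        apply (div_le_div_iff_of_pos_right (pow_pos ht.1 _)).mpr
        rw [intervalIntegral.integral_of_le ht.1.le, intervalIntegral.integral_of_le ht.1.le]
        apply integral_mono_of_nonneg
        · apply (ae_restrict_iff' measurableSet_Ioc).2 (ae_of_all _ _)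
          intro s hs
          exact mul_nonneg (pow_nonneg hs.1.le _)
            (mul_nonneg (hp_nonneg i s hs.1.le) (hf_nonneg i _ fun j => hu_nonneg k j s hs.1.le))
        · exact (hBig_int r hr).mono_set (fun x hx => ⟨hx.1.le, hx.2.trans ht.2⟩)
        · apply (ae_restrict_iff' measurableSet_Ioc).2 (ae_of_all _ _)
          intro s hs
          have hs0 : (0:ℝ) ≤ s := hs.1.le
          have hfu : f i (fun j => u k j s) ≤ ∑ j, f j (fun _ => z s) := by
            calc f i (fun j => u k j s) ≤ f i (fun _ => z s) :=
                  hC2 i _ _ (fun j => hu_nonneg k j s hs0) (fun j => ih j s hs0)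
              _ ≤ ∑ j, f j (fun _ => z s) :=
                  Finset.single_le_sum (fun j _ => hf_nonneg j _ fun _ => hz_nonneg s hs0)
                    (Finset.mem_univ i)
          have hpu : p i s ≤ P s := Finset.single_le_sum (fun j _ => hp_nonneg j s hs0)
            (Finset.mem_univ i)
          show s ^ (N - 1) * (p i s * f i (fun j => u k j s))
            ≤ s ^ (N - 1) * (P s * ∑ j, f j (fun _ => z s))
          exact mul_le_mul_of_nonneg_left
            (mul_le_mul hpu hfu (hf_nonneg i _ fun j => hu_nonneg k j s hs0) (hP_nonneg s hs0))
            (pow_nonneg hs0 _)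
    have hzr : z r = z 0 + ∫ t in (0:ℝ)..r, (∫ s in (0:ℝ)..t, Big s) / t ^ (N - 1) := hz r hr
    rw [huk k i r hr, hzr]
    exact add_le_add hβle key
end

section
/- Suppose (C1)–(C2) hold and ψ_1,…,ψ_d : [0,∞) → [0,∞) are continuous with ∫₀^∞ t Σ_{j=1}^d ψ_j(t) dt = ∞. Let (u_1,…,u_d) be nonnegative nondecreasing bounded functions on [0,∞), not all identically zero, satisfying u_i(r) ≥ u_i(0) + ∫₀^r t^{1-N} ∫₀^t s^{N-1} ψ_i(s) f_i(u_1(s),…,u_d(s)) ds dt for all r ≥ 0 and i = 1,…,d, and suppose there exist R > 0 and M_1,…,M_d > 0 with u_i(r) ≥ M_i/2 for all r ≥ R. Then, writing c_0^i = f_i(M_1/2,…,M_d/2), m_1 = min{u_1(0),…,u_d(0)}, and m_2 = min{c_0^1,…,c_0^d}, one has Σ_{i=1}^d u_i(r) ≥ d m_1 + (m_2/N) ∫_R^r t Σ_{i=1}^d ψ_i(t) dt for r ≥ R, and hence Σ_{i=1}^d u_i(r) → ∞ as r → ∞, contradicting boundedness. -/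
open MeasureTheory Set Filter

lemma aux_key14 (N : ℕ) (hN : 3 ≤ N) (g : ℝ → ℝ) (hg : Continuous g)
    (hg0 : ∀ t, 0 ≤ g t) (R r : ℝ) (hR : 0 < R) (hr : 2 * R ≤ r) :
    (((N:ℝ) - 2)⁻¹ / 2) * ∫ t in R..r/2, t * g t
      ≤ ∫ t in R..r, (∫ s in R..t, s ^ (N-1) * g s) / t ^ (N-1) := by
  have hN3 : (3:ℝ) ≤ (N:ℝ) := by exact_mod_cast hN
  have hN2pos : (0:ℝ) < (N:ℝ) - 2 := by linarith
  set c : ℝ := ((N:ℝ) - 2)⁻¹ with hc_def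
  have hcpos : 0 < c := inv_pos.2 hN2pos
  have hRr : R ≤ r := by linarith
  have hRx : R ≤ r / 2 := by linarith
  have hxr : r / 2 ≤ r := by linarith
  have hrpos : 0 < r := by linarith
  have huIcc : uIcc R r = Icc R r := uIcc_of_le hRr
  have hw : Continuous (fun s : ℝ => s ^ (N-1) * g s) := (continuous_pow _).mul hg
  set G : ℝ → ℝ := fun t => ∫ s in R..t, s ^ (N-1) * g s with hG_def
  set H : ℝ → ℝ := fun t => -(c * ((t:ℝ) ^ (N-2))⁻¹) with hH_def
  have hGd : ∀ x ∈ uIcc R r, HasDerivAt G (x ^ (N-1) * g x) x := fun x _ =>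
    (hw.integral_hasStrictDerivAt R x).hasDerivAt
  have hcast : ((N-2:ℕ):ℝ) = (N:ℝ) - 2 := by
    have h2 : (2:ℕ) ≤ N := by omega
    push_cast [h2]; ring
  have hHd : ∀ x ∈ uIcc R r, HasDerivAt H ((x ^ (N-1))⁻¹) x := by
    intro x hx
    rw [huIcc] at hx
    have hx0 : (0:ℝ) < x := lt_of_lt_of_le hR hx.1
    have hzp : HasDerivAt (fun t : ℝ => t ^ (-(N-2:ℕ):ℤ))
        (((-(N-2:ℕ):ℤ):ℝ) * x ^ ((-(N-2:ℕ):ℤ) - 1)) x :=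
      hasDerivAt_zpow _ _ (Or.inl hx0.ne')
    have h1 : H = fun t : ℝ => -(c * t ^ (-(N-2:ℕ):ℤ)) := by
      funext t; simp [hH_def, zpow_neg, zpow_natCast]
    rw [h1]
    have h2 := (hzp.const_mul c).neg
    convert h2 using 1
    all_goals try rfl
    have hze : ((-(N-2:ℕ):ℤ) - 1) = -((N-1:ℕ):ℤ) := by push_cast; omega
    rw [hze, zpow_neg, zpow_natCast]
    rw [show (((-(N-2:ℕ):ℤ)):ℝ) = -((N:ℝ)-2) by push_cast [hcast]; ring]
    field_simp
    rw [hc_def]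
    field_simp
  -- integrability facts
  have hH'int : IntervalIntegrable (fun t : ℝ => ((t:ℝ) ^ (N-1))⁻¹) volume R r := by
    apply ContinuousOn.intervalIntegrable
    apply ContinuousOn.inv₀ (continuous_pow _).continuousOn
    intro x hx
    rw [huIcc] at hx
    exact pow_ne_zero _ (lt_of_lt_of_le hR hx.1).ne'
  have hibp := intervalIntegral.integral_mul_deriv_eq_deriv_mul hGd hHd
      (hw.intervalIntegrable R r) hH'int
  -- hibp : ∫ x in R..r, G x * (x^(N-1))⁻¹ = G r * H r - G R * H R - ∫ x in R..r, (x^(N-1)*g x) * H x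
  have hGR : G R = 0 := intervalIntegral.integral_same
  have htg : Continuous (fun t : ℝ => t * g t) := continuous_id.mul hg
  have h3 : (∫ x in R..r, (x ^ (N-1) * g x) * H x) = -(c * ∫ x in R..r, x * g x) := by
    rw [← intervalIntegral.integral_const_mul, ← intervalIntegral.integral_neg]
    apply intervalIntegral.integral_congr
    intro x hx
    rw [huIcc] at hx
    have hx0 : 0 < x := lt_of_lt_of_le hR hx.1
    have hpow : x ^ (N-1) = x ^ (N-2) * x := by
      rw [← pow_succ]; congr 1; omega
    have hne : x ^ (N-2) ≠ 0 := pow_ne_zero _ hx0.ne'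
    simp only [hH_def]
    rw [hpow]
    field_simp
  -- splitting
  have hA : IntervalIntegrable (fun t : ℝ => t * g t) volume R (r/2) := htg.intervalIntegrable _ _
  have hB : IntervalIntegrable (fun t : ℝ => t * g t) volume (r/2) r := htg.intervalIntegrable _ _
  have hsplit : (∫ t in R..r, t * g t)
      = (∫ t in R..r/2, t * g t) + ∫ t in (r/2)..r, t * g t :=
    (intervalIntegral.integral_add_adjacent_intervals hA hB).symm
  have hGsplit : G r = (∫ s in R..r/2, s ^ (N-1) * g s) + ∫ s in (r/2)..r, s ^ (N-1) * g s :=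
    (intervalIntegral.integral_add_adjacent_intervals
      (hw.intervalIntegrable _ _) (hw.intervalIntegrable _ _)).symm
  -- bound on G r * (r^(N-2))⁻¹
  have hbound : G r * ((r:ℝ) ^ (N-2))⁻¹
      ≤ (1/2) * (∫ t in R..r/2, t * g t) + ∫ t in (r/2)..r, t * g t := by
    rw [hGsplit, add_mul]
    have e1 : (∫ s in R..r/2, s ^ (N-1) * g s) * ((r:ℝ) ^ (N-2))⁻¹
        = ∫ s in R..r/2, (s ^ (N-1) * g s) * ((r:ℝ) ^ (N-2))⁻¹ :=
      (intervalIntegral.integral_mul_const _ _).symm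
    have e2 : (∫ s in (r/2)..r, s ^ (N-1) * g s) * ((r:ℝ) ^ (N-2))⁻¹
        = ∫ s in (r/2)..r, (s ^ (N-1) * g s) * ((r:ℝ) ^ (N-2))⁻¹ :=
      (intervalIntegral.integral_mul_const _ _).symm
    have e3 : (1/2) * (∫ t in R..r/2, t * g t) = ∫ t in R..r/2, (1/2) * (t * g t) :=
      (intervalIntegral.integral_const_mul _ _).symm
    rw [e1, e2, e3]
    have hrne : ((r:ℝ) ^ (N-2)) ≠ 0 := pow_ne_zero _ hrpos.ne'
    have hrinv : (0:ℝ) ≤ ((r:ℝ) ^ (N-2))⁻¹ := inv_nonneg.2 (pow_nonneg hrpos.le _)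
    have ineq1 : (∫ s in R..r/2, (s ^ (N-1) * g s) * ((r:ℝ) ^ (N-2))⁻¹)
        ≤ ∫ t in R..r/2, (1/2) * (t * g t) := by
      apply intervalIntegral.integral_mono_on hRx
        ((hw.mul continuous_const).intervalIntegrable _ _)
        ((continuous_const.mul htg).intervalIntegrable _ _)
      intro s hs
      have hs0 : 0 ≤ s := le_trans hR.le hs.1
      have hkey : s ^ (N-1) * ((r:ℝ) ^ (N-2))⁻¹ ≤ s / 2 := by
        have hp1 : s ^ (N-1) = s * s ^ (N-2) := by
          rw [mul_comm, ← pow_succ]; congr 1; omega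
        have hp2 : s ^ (N-2) ≤ (r/2) ^ (N-2) := pow_le_pow_left₀ hs0 hs.2 _
        have hp3 : (r/2) ^ (N-2) * ((r:ℝ) ^ (N-2))⁻¹ = ((1:ℝ)/2) ^ (N-2) := by
          rw [div_pow, div_pow]
          field_simp
          ring
        have hp4 : ((1:ℝ)/2) ^ (N-2) ≤ 1/2 := by
          have h1 : (1:ℕ) ≤ N - 2 := by omega
          calc ((1:ℝ)/2) ^ (N-2) ≤ ((1:ℝ)/2) ^ (1:ℕ) :=
            pow_le_pow_of_le_one (by norm_num) (by norm_num) h1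
          _ = 1/2 := pow_one _
        calc s ^ (N-1) * ((r:ℝ) ^ (N-2))⁻¹ = s * (s ^ (N-2) * ((r:ℝ) ^ (N-2))⁻¹) := by
              rw [hp1]; ring
        _ ≤ s * ((r/2) ^ (N-2) * ((r:ℝ) ^ (N-2))⁻¹) := by
              apply mul_le_mul_of_nonneg_left (mul_le_mul_of_nonneg_right hp2 hrinv) hs0
        _ = s * ((1:ℝ)/2) ^ (N-2) := by rw [hp3]
        _ ≤ s * (1/2) := mul_le_mul_of_nonneg_left hp4 hs0
        _ = s / 2 := by ring
      calc (s ^ (N-1) * g s) * ((r:ℝ) ^ (N-2))⁻¹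
          = (s ^ (N-1) * ((r:ℝ) ^ (N-2))⁻¹) * g s := by ring
      _ ≤ (s / 2) * g s := mul_le_mul_of_nonneg_right hkey (hg0 s)
      _ = (1/2) * (s * g s) := by ring
    have ineq2 : (∫ s in (r/2)..r, (s ^ (N-1) * g s) * ((r:ℝ) ^ (N-2))⁻¹)
        ≤ ∫ t in (r/2)..r, t * g t := by
      apply intervalIntegral.integral_mono_on hxr
        ((hw.mul continuous_const).intervalIntegrable _ _)
        (htg.intervalIntegrable _ _)
      intro s hs
      have hs0 : 0 ≤ s := by linarith [hs.1]
      have hkey : s ^ (N-1) * ((r:ℝ) ^ (N-2))⁻¹ ≤ s := by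
        have hp1 : s ^ (N-1) = s * s ^ (N-2) := by
          rw [mul_comm, ← pow_succ]; congr 1; omega
        have hp2 : s ^ (N-2) ≤ r ^ (N-2) := pow_le_pow_left₀ hs0 hs.2 _
        have hrpow : (0:ℝ) < r ^ (N-2) := pow_pos hrpos _
        calc s ^ (N-1) * ((r:ℝ) ^ (N-2))⁻¹ = s * (s ^ (N-2) * ((r:ℝ) ^ (N-2))⁻¹) := by
              rw [hp1]; ring
        _ ≤ s * (r ^ (N-2) * ((r:ℝ) ^ (N-2))⁻¹) := by
              apply mul_le_mul_of_nonneg_left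
                (mul_le_mul_of_nonneg_right hp2 (inv_nonneg.2 hrpow.le)) hs0
        _ = s * 1 := by rw [mul_inv_cancel₀ hrpow.ne']
        _ = s := mul_one s
      calc (s ^ (N-1) * g s) * ((r:ℝ) ^ (N-2))⁻¹
          = (s ^ (N-1) * ((r:ℝ) ^ (N-2))⁻¹) * g s := by ring
      _ ≤ s * g s := mul_le_mul_of_nonneg_right hkey (hg0 s)
    linarith
  -- assemble
  have hdiv2inv : (∫ t in R..r, (∫ s in R..t, s ^ (N-1) * g s) / t ^ (N-1))
      = ∫ x in R..r, G x * ((x:ℝ) ^ (N-1))⁻¹ := by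
    apply intervalIntegral.integral_congr
    intro x _
    simp only [hG_def, div_eq_mul_inv]
  rw [hdiv2inv, hibp, hGR, h3]
  have hHr : H r = -(c * ((r:ℝ) ^ (N-2))⁻¹) := rfl
  rw [hHr]
  have hXle : G r * ((r:ℝ) ^ (N-2))⁻¹
      ≤ (1/2) * (∫ t in R..r/2, t * g t) + ∫ t in (r/2)..r, t * g t := hbound
  have hInonneg : 0 ≤ ∫ t in R..r/2, t * g t :=
    intervalIntegral.integral_nonneg hRx (fun t ht => mul_nonneg (le_trans hR.le ht.1) (hg0 t))
  have hmul := mul_le_mul_of_nonneg_left hXle hcpos.le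
  rw [hsplit]
  nlinarith [hmul, hcpos, hInonneg]


theorem stmt14
    (N d : ℕ) (hN : 3 ≤ N) (hd : 1 ≤ d)
    (f : Fin d → (Fin d → ℝ) → ℝ)
    -- (C1)
    (hf_nonneg : ∀ j v, (∀ i, 0 ≤ v i) → 0 ≤ f j v)
    (hC1 : ∀ j, ContDiffOn ℝ 1 (f j) {v : Fin d → ℝ | ∀ i, 0 ≤ v i})
    (hf0 : ∀ j, f j (fun _ => 0) = 0)
    (hfpos : ∀ j v, (∀ i, 0 ≤ v i) → (∃ i, 0 < v i) → 0 < f j v)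
    -- (C2)
    (hC2 : ∀ j v w, (∀ i, 0 ≤ v i) → (∀ i, v i ≤ w i) → f j v ≤ f j w)
    -- continuous nonnegative ψ₁,…,ψ_d with ∫₀^∞ t Σⱼ ψⱼ(t) dt = ∞
    (ψ : Fin d → ℝ → ℝ)
    (hψ_cont : ∀ i, ContinuousOn (ψ i) (Ici 0))
    (hψ_nonneg : ∀ i, ∀ t ≥ (0:ℝ), 0 ≤ ψ i t)
    (hdiv : ¬ IntegrableOn (fun t : ℝ => t * ∑ j, ψ j t) (Ioi 0))
    -- (u₁,…,u_d) nonnegative nondecreasing bounded, not all identically zero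
    (u : Fin d → ℝ → ℝ)
    (hu_nonneg : ∀ i, ∀ r ≥ (0:ℝ), 0 ≤ u i r)
    (hu_mono : ∀ i, MonotoneOn (u i) (Ici 0))
    (hu_bdd : ∀ i, ∃ M : ℝ, ∀ r ≥ (0:ℝ), u i r ≤ M)
    (hu_nontriv : ∃ i, ∃ r ≥ (0:ℝ), u i r ≠ 0)
    -- the integral inequality
    (hu_ineq : ∀ i, ∀ r ≥ (0:ℝ),
      u i 0 +
        ∫ t in (0:ℝ)..r,
          (∫ s in (0:ℝ)..t, s ^ (N - 1) * (ψ i s * f i (fun j => u j s))) / t ^ (N - 1)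
        ≤ u i r)
    -- R > 0 and M₁,…,M_d > 0 with uᵢ(r) ≥ Mᵢ/2 for r ≥ R
    (R : ℝ) (hR : 0 < R)
    (M : Fin d → ℝ) (hM : ∀ i, 0 < M i)
    (huM : ∀ i, ∀ r ≥ R, M i / 2 ≤ u i r)
    -- m₁ = min {u₁(0),…,u_d(0)}, m₂ = min {c₀¹,…,c₀^d} with c₀ⁱ = fᵢ(M₁/2,…,M_d/2)
    (m₁ : ℝ) (hm₁ : IsLeast (range fun i => u i 0) m₁)
    (m₂ : ℝ) (hm₂ : IsLeast (range fun i => f i (fun j => M j / 2)) m₂) :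
    -- conclusions
    (∀ r ≥ R,
      (d : ℝ) * m₁ + m₂ / N * ∫ t in R..r, t * ∑ i, ψ i t ≤ ∑ i, u i r) ∧
    Tendsto (fun r => ∑ i, u i r) atTop atTop ∧
    False := by
  have hN3 : (3:ℝ) ≤ (N:ℝ) := by exact_mod_cast hN
  have hN2pos : (0:ℝ) < (N:ℝ) - 2 := by linarith
  have i₀ : Fin d := ⟨0, hd⟩
  -- global bound B
  choose Mb hMb using hu_bdd
  set B : ℝ := ∑ j, max (Mb j) 0 with hB_def
  have hB : ∀ j, ∀ r ≥ (0:ℝ), u j r ≤ B := by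
    intro j r hr
    calc u j r ≤ Mb j := hMb j r hr
    _ ≤ max (Mb j) 0 := le_max_left _ _
    _ ≤ B := Finset.single_le_sum (f := fun j => max (Mb j) 0)
        (fun i _ => le_max_right _ _) (Finset.mem_univ j)
  have hB0 : (0:ℝ) ≤ B := le_trans (hu_nonneg i₀ 0 le_rfl) (hB i₀ 0 le_rfl)
  -- m₂ > 0
  have hm₂pos : 0 < m₂ := by
    obtain ⟨i, hi⟩ := hm₂.1
    rw [← hi]
    exact hfpos i _ (fun j => (half_pos (hM j)).le) ⟨i₀, half_pos (hM i₀)⟩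
  have hm₂le : ∀ i, m₂ ≤ f i (fun j => M j / 2) := fun i => hm₂.2 ⟨i, rfl⟩
  -- extended functions
  set U : Fin d → ℝ → ℝ := fun j r => u j (max r 0) with hU_def
  have hU_mono : ∀ j, Monotone (U j) := fun j a b hab =>
    hu_mono j (le_max_right a 0) (le_max_right b 0) (max_le_max hab le_rfl)
  have hU_eq : ∀ j, ∀ s ≥ (0:ℝ), U j s = u j s := by
    intro j s hs; rw [hU_def]; simp [max_eq_left hs]
  have hU_nonneg : ∀ j s, 0 ≤ U j s := fun j s => hu_nonneg j _ (le_max_right _ _)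
  have hU_le : ∀ j s, U j s ≤ B := fun j s => hB j _ (le_max_right _ _)
  set Ψ : Fin d → ℝ → ℝ := fun i t => ψ i (max t 0) with hΨ_def
  have hΨ_cont : ∀ i, Continuous (Ψ i) := fun i =>
    (hψ_cont i).comp_continuous (continuous_id.max continuous_const)
      (fun x => mem_Ici.2 (le_max_right x 0))
  have hΨ_nonneg : ∀ i t, 0 ≤ Ψ i t := fun i t => hψ_nonneg i _ (le_max_right _ _)
  have hΨ_eq : ∀ i, ∀ t ≥ (0:ℝ), Ψ i t = ψ i t := by
    intro i t ht; rw [hΨ_def]; simp [max_eq_left ht]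
  set Φ : Fin d → (Fin d → ℝ) → ℝ := fun i v => f i (fun j => max (v j) 0) with hΦ_def
  have hΦ_cont : ∀ i, Continuous (Φ i) := fun i =>
    (hC1 i).continuousOn.comp_continuous
      (continuous_pi fun j => (continuous_apply j).max continuous_const)
      (fun v j => le_max_right _ _)
  have hΦU_eq : ∀ i s, Φ i (fun j => U j s) = f i (fun j => U j s) := by
    intro i s; simp only [hΦ_def]
    congr 1; funext j; exact max_eq_left (hU_nonneg j s)
  have hΦU_le : ∀ i s, Φ i (fun j => U j s) ≤ f i (fun _ => B) := by
    intro i s; rw [hΦU_eq]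
    exact hC2 i _ _ (fun j => hU_nonneg j s) (fun j => hU_le j s)
  have hΦU_nonneg : ∀ i s, 0 ≤ Φ i (fun j => U j s) := by
    intro i s; rw [hΦU_eq]; exact hf_nonneg i _ (fun j => hU_nonneg j s)
  have hfB_nonneg : ∀ i, (0:ℝ) ≤ f i (fun _ => B) := fun i =>
    hf_nonneg i _ (fun j => hB0)
  -- q
  set q : Fin d → ℝ → ℝ := fun i s => Ψ i s * Φ i (fun j => U j s) with hq_def
  have hq_meas : ∀ i, Measurable (q i) := fun i =>
    ((hΨ_cont i).measurable).mul ((hΦ_cont i).measurable.comp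
      (measurable_pi_lambda _ fun j => (hU_mono j).measurable))
  have hq_nonneg : ∀ i s, 0 ≤ q i s := fun i s =>
    mul_nonneg (hΨ_nonneg i s) (hΦU_nonneg i s)
  have hq_le : ∀ i s, q i s ≤ Ψ i s * f i (fun _ => B) := fun i s =>
    mul_le_mul_of_nonneg_left (hΦU_le i s) (hΨ_nonneg i s)
  -- integrability of s^(N-1) * q i s
  have hh_int : ∀ i a b, IntervalIntegrable (fun s => s ^ (N-1) * q i s) volume a b := by
    intro i a b
    apply IntervalIntegrable.mono_fun'
      (g := fun s => |s| ^ (N-1) * (Ψ i s * f i (fun _ => B)))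
    · exact ((continuous_abs.pow _).mul ((hΨ_cont i).mul continuous_const)).intervalIntegrable _ _
    · exact ((measurable_id.pow_const _).mul (hq_meas i)).aestronglyMeasurable
    · apply Filter.Eventually.of_forall
      intro s
      show ‖s ^ (N-1) * q i s‖ ≤ |s| ^ (N-1) * (Ψ i s * f i fun _ => B)
      rw [Real.norm_eq_abs, abs_mul, abs_pow]
      have h1 : |q i s| = q i s := abs_of_nonneg (hq_nonneg i s)
      rw [h1]
      exact mul_le_mul_of_nonneg_left (hq_le i s) (pow_nonneg (abs_nonneg s) _)
  set Q : Fin d → ℝ → ℝ := fun i t => ∫ s in (0:ℝ)..t, s ^ (N-1) * q i s with hQ_def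
  have hQ_cont : ∀ i, Continuous (Q i) := fun i =>
    intervalIntegral.continuous_primitive (hh_int i) 0
  have hQ_nonneg : ∀ i, ∀ t ≥ (0:ℝ), 0 ≤ Q i t := fun i t ht =>
    intervalIntegral.integral_nonneg ht
      (fun s hs => mul_nonneg (pow_nonneg hs.1 _) (hq_nonneg i s))
  -- the key estimate
  have key : ∀ x ≥ R, ∀ i : Fin d,
      m₂ * ((((N:ℝ)-2)⁻¹/2) * ∫ t in R..x, t * Ψ i t) ≤ B := by
    intro x hx i
    set r : ℝ := 2 * x with hr_def
    have hx0 : 0 < x := lt_of_lt_of_le hR hx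
    have hr2R : 2 * R ≤ r := by rw [hr_def]; linarith
    have hrR : R ≤ r := by linarith
    have hr0 : (0:ℝ) ≤ r := by linarith
    have hrhalf : r / 2 = x := by rw [hr_def]; ring
    have h1 : u i 0 + (∫ t in (0:ℝ)..r, Q i t / t ^ (N-1)) ≤ u i r := by
      have hcongr : (∫ t in (0:ℝ)..r,
          (∫ s in (0:ℝ)..t, s ^ (N-1) * (ψ i s * f i (fun j => u j s))) / t ^ (N-1))
          = ∫ t in (0:ℝ)..r, Q i t / t ^ (N-1) := by
        apply intervalIntegral.integral_congr
        intro t ht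
        rw [uIcc_of_le hr0] at ht
        have ht0 : (0:ℝ) ≤ t := ht.1
        show (∫ s in (0:ℝ)..t, s ^ (N-1) * (ψ i s * f i (fun j => u j s))) / t ^ (N-1)
            = Q i t / t ^ (N-1)
        have heq : (∫ s in (0:ℝ)..t, s ^ (N-1) * (ψ i s * f i (fun j => u j s))) = Q i t := by
          simp only [hQ_def]
          apply intervalIntegral.integral_congr
          intro s hs
          rw [uIcc_of_le ht0] at hs
          have hs0 : (0:ℝ) ≤ s := hs.1
          have e1 : Ψ i s = ψ i s := hΨ_eq i s hs0
          have e2 : Φ i (fun j => U j s) = f i (fun j => u j s) := by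
            rw [hΦU_eq]; congr 1; funext j; exact hU_eq j s hs0
          show s ^ (N-1) * (ψ i s * f i (fun j => u j s)) = s ^ (N-1) * q i s
          simp only [hq_def]
          rw [e1, e2]
        rw [heq]
      rw [← hcongr]
      exact hu_ineq i r hr0
    obtain ⟨C₁, hC₁⟩ := (isCompact_Icc (a := (0:ℝ)) (b := r)).exists_bound_of_continuousOn
      (hΨ_cont i).continuousOn
    have hC₁0 : ∀ t ∈ Icc (0:ℝ) r, Ψ i t ≤ C₁ := fun t ht =>
      le_trans (le_abs_self _) (by rw [← Real.norm_eq_abs]; exact hC₁ t ht)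
    have hC₁nonneg : 0 ≤ C₁ :=
      le_trans (hΨ_nonneg i 0) (hC₁0 0 ⟨le_rfl, hr0⟩)
    set Ci : ℝ := f i (fun _ => B) with hCi_def
    have hCinn : (0:ℝ) ≤ Ci := hfB_nonneg i
    have hQbound : ∀ t ∈ Icc (0:ℝ) r, Q i t / t ^ (N-1) ≤ C₁ * Ci * r := by
      intro t ht
      rcases eq_or_lt_of_le ht.1 with h0 | h0
      · rw [← h0]
        have : Q i 0 = 0 := by simp only [hQ_def]; exact intervalIntegral.integral_same
        rw [this]
        simp only [zero_div]
        positivity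
      · have htpos : 0 < t := h0
        have hQle : Q i t ≤ C₁ * Ci * (t ^ N / N) := by
          have hrhs : (∫ s in (0:ℝ)..t, (C₁ * Ci) * s ^ (N-1)) = C₁ * Ci * (t ^ N / N) := by
            rw [intervalIntegral.integral_const_mul, integral_pow]
            have hNN : N - 1 + 1 = N := by omega
            rw [hNN]
            have h1 : (1:ℕ) ≤ N := by omega
            have hz : (0:ℝ) ^ N = 0 := zero_pow (by omega)
            rw [hz]
            push_cast [h1]
            ring
          rw [← hrhs]
          simp only [hQ_def]
          apply intervalIntegral.integral_mono_on htpos.le (hh_int i 0 t)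
            ((continuous_const.mul (continuous_pow _)).intervalIntegrable _ _)
          intro s hs
          have hs0 : 0 ≤ s := hs.1
          have hsr : s ∈ Icc (0:ℝ) r := ⟨hs0, le_trans hs.2 ht.2⟩
          have : q i s ≤ C₁ * Ci := by
            calc q i s ≤ Ψ i s * Ci := hq_le i s
            _ ≤ C₁ * Ci := mul_le_mul_of_nonneg_right (hC₁0 s hsr) hCinn
          calc s ^ (N-1) * q i s ≤ s ^ (N-1) * (C₁ * Ci) :=
                mul_le_mul_of_nonneg_left this (pow_nonneg hs0 _)
          _ = C₁ * Ci * s ^ (N-1) := by ring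
        have htN : t ^ N = t ^ (N-1) * t := by rw [← pow_succ]; congr 1; omega
        have hNpos : (0:ℝ) < (N:ℝ) := by linarith
        calc Q i t / t ^ (N-1) ≤ (C₁ * Ci * (t ^ N / N)) / t ^ (N-1) :=
              (div_le_div_iff_of_pos_right (pow_pos htpos _)).2 hQle
        _ = C₁ * Ci * (t / N) := by
              rw [htN]
              field_simp
        _ ≤ C₁ * Ci * r := by
              apply mul_le_mul_of_nonneg_left _ (by positivity)
              calc t / (N:ℝ) ≤ t := div_le_self htpos.le (by linarith)
              _ ≤ r := ht.2
    have hφ_int : IntervalIntegrable (fun t => Q i t / t ^ (N-1)) volume 0 r := by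
      apply IntervalIntegrable.mono_fun' (g := fun _ => C₁ * Ci * r)
      · exact intervalIntegrable_const
      · exact ((hQ_cont i).measurable.div (measurable_id.pow_const _)).aestronglyMeasurable
      · apply Filter.eventually_of_mem (self_mem_ae_restrict measurableSet_uIoc)
        intro t ht
        have ht' : t ∈ Icc (0:ℝ) r := by
          rw [uIoc_of_le hr0] at ht; exact ⟨ht.1.le, ht.2⟩
        show ‖Q i t / t ^ (N-1)‖ ≤ C₁ * Ci * r
        rw [Real.norm_eq_abs,
          abs_of_nonneg (div_nonneg (hQ_nonneg i t ht'.1) (pow_nonneg ht'.1 _))]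
        exact hQbound t ht'
    have hφ0R : IntervalIntegrable (fun t => Q i t / t ^ (N-1)) volume 0 R :=
      hφ_int.mono_set (by rw [uIcc_of_le hR.le, uIcc_of_le hr0]; exact Icc_subset_Icc le_rfl hrR)
    have hφRr : IntervalIntegrable (fun t => Q i t / t ^ (N-1)) volume R r :=
      hφ_int.mono_set (by rw [uIcc_of_le hrR, uIcc_of_le hr0]; exact Icc_subset_Icc hR.le le_rfl)
    have hsplitφ : (∫ t in (0:ℝ)..r, Q i t / t ^ (N-1))
        = (∫ t in (0:ℝ)..R, Q i t / t ^ (N-1)) + ∫ t in R..r, Q i t / t ^ (N-1) :=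
      (intervalIntegral.integral_add_adjacent_intervals hφ0R hφRr).symm
    have hφ0Rnonneg : 0 ≤ ∫ t in (0:ℝ)..R, Q i t / t ^ (N-1) :=
      intervalIntegral.integral_nonneg hR.le
        (fun t ht => div_nonneg (hQ_nonneg i t ht.1) (pow_nonneg ht.1 _))
    have hGcont : Continuous (fun t => ∫ s in R..t, s ^ (N-1) * Ψ i s) :=
      intervalIntegral.continuous_primitive
        (fun a b => (((continuous_pow _).mul (hΨ_cont i))).intervalIntegrable a b) R
    have hGint : IntervalIntegrable
        (fun t => m₂ * ((∫ s in R..t, s ^ (N-1) * Ψ i s) / t ^ (N-1))) volume R r := by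
      apply ContinuousOn.intervalIntegrable
      apply ContinuousOn.mul continuousOn_const
      apply ContinuousOn.div hGcont.continuousOn (continuous_pow _).continuousOn
      intro t ht
      rw [uIcc_of_le hrR] at ht
      exact pow_ne_zero _ (lt_of_lt_of_le hR ht.1).ne'
    have h7 : (∫ t in R..r, m₂ * ((∫ s in R..t, s ^ (N-1) * Ψ i s) / t ^ (N-1)))
        ≤ ∫ t in R..r, Q i t / t ^ (N-1) := by
      apply intervalIntegral.integral_mono_on hrR hGint hφRr
      intro t ht
      have ht0 : 0 < t := lt_of_lt_of_le hR ht.1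
      have hQsplit : Q i t = (∫ s in (0:ℝ)..R, s ^ (N-1) * q i s)
          + ∫ s in R..t, s ^ (N-1) * q i s := by
        simp only [hQ_def]
        exact (intervalIntegral.integral_add_adjacent_intervals (hh_int i 0 R) (hh_int i R t)).symm
      have hpos1 : 0 ≤ ∫ s in (0:ℝ)..R, s ^ (N-1) * q i s :=
        intervalIntegral.integral_nonneg hR.le
          (fun s hs => mul_nonneg (pow_nonneg hs.1 _) (hq_nonneg i s))
      have hmono2 : (∫ s in R..t, m₂ * (s ^ (N-1) * Ψ i s)) ≤ ∫ s in R..t, s ^ (N-1) * q i s := by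
        apply intervalIntegral.integral_mono_on ht.1
          ((continuous_const.mul ((continuous_pow _).mul (hΨ_cont i))).intervalIntegrable _ _)
          (hh_int i R t)
        intro s hs
        have hs0 : 0 ≤ s := le_trans hR.le hs.1
        have hfm : m₂ ≤ Φ i (fun j => U j s) := by
          rw [hΦU_eq]
          calc m₂ ≤ f i (fun j => M j / 2) := hm₂le i
          _ ≤ f i (fun j => U j s) := by
            apply hC2 i _ _ (fun j => (half_pos (hM j)).le)
            intro j
            rw [hU_eq j s hs0]
            exact huM j s hs.1
        have hnn : 0 ≤ s ^ (N-1) * Ψ i s := mul_nonneg (pow_nonneg hs0 _) (hΨ_nonneg i s)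
        calc m₂ * (s ^ (N-1) * Ψ i s) = (s ^ (N-1) * Ψ i s) * m₂ := by ring
        _ ≤ (s ^ (N-1) * Ψ i s) * Φ i (fun j => U j s) := mul_le_mul_of_nonneg_left hfm hnn
        _ = s ^ (N-1) * q i s := by simp only [hq_def]; ring
      rw [intervalIntegral.integral_const_mul] at hmono2
      have hQge : m₂ * (∫ s in R..t, s ^ (N-1) * Ψ i s) ≤ Q i t := by
        rw [hQsplit]; linarith
      have hinv : (0:ℝ) ≤ (t ^ (N-1))⁻¹ := inv_nonneg.2 (pow_nonneg ht0.le _)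
      calc m₂ * ((∫ s in R..t, s ^ (N-1) * Ψ i s) / t ^ (N-1))
          = (m₂ * (∫ s in R..t, s ^ (N-1) * Ψ i s)) * (t ^ (N-1))⁻¹ := by
            rw [div_eq_mul_inv]; ring
      _ ≤ Q i t * (t ^ (N-1))⁻¹ := mul_le_mul_of_nonneg_right hQge hinv
      _ = Q i t / t ^ (N-1) := (div_eq_mul_inv _ _).symm
    have h8 : (∫ t in R..r, m₂ * ((∫ s in R..t, s ^ (N-1) * Ψ i s) / t ^ (N-1)))
        = m₂ * ∫ t in R..r, (∫ s in R..t, s ^ (N-1) * Ψ i s) / t ^ (N-1) :=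
      intervalIntegral.integral_const_mul _ _
    have h9 := aux_key14 N hN (Ψ i) (hΨ_cont i) (hΨ_nonneg i) R r hR hr2R
    rw [hrhalf] at h9
    have h10 := mul_le_mul_of_nonneg_left h9 hm₂pos.le
    have hur : u i r ≤ B := hB i r hr0
    have hu0 : 0 ≤ u i 0 := hu_nonneg i 0 le_rfl
    linarith [h10, h8.symm.le, h8.le, h7, hsplitφ.le, hφ0Rnonneg, h1, hur, hu0]
  -- summing and contradiction with non-integrability
  set K : ℝ := (d:ℝ) * (2 * ((N:ℝ)-2) * B / m₂) with hK_def
  have key2 : ∀ x ≥ R, (∫ t in R..x, t * ∑ j, ψ j t) ≤ K := by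
    intro x hx
    have hψint : ∀ j : Fin d, IntervalIntegrable (fun t => t * ψ j t) volume R x := by
      intro j
      apply ContinuousOn.intervalIntegrable
      apply ContinuousOn.mul continuousOn_id
      apply (hψ_cont j).mono
      rw [uIcc_of_le hx]
      exact fun t ht => le_trans hR.le ht.1
    have hsum : (∫ t in R..x, t * ∑ j, ψ j t) = ∑ j, ∫ t in R..x, t * ψ j t := by
      rw [← intervalIntegral.integral_finset_sum (fun j _ => hψint j)]
      apply intervalIntegral.integral_congr
      intro t _
      show t * ∑ j, ψ j t = ∑ j, t * ψ j t
      rw [Finset.mul_sum]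
    have hterm : ∀ j : Fin d, (∫ t in R..x, t * ψ j t) ≤ 2 * ((N:ℝ)-2) * B / m₂ := by
      intro j
      have hψΨ : (∫ t in R..x, t * ψ j t) = ∫ t in R..x, t * Ψ j t := by
        apply intervalIntegral.integral_congr
        intro t ht
        rw [uIcc_of_le hx] at ht
        have ht0 : (0:ℝ) ≤ t := le_trans hR.le ht.1
        show t * ψ j t = t * Ψ j t
        rw [hΨ_eq j t ht0]
      rw [hψΨ, le_div_iff₀ hm₂pos]
      have hk := key x hx j
      have h2 := mul_le_mul_of_nonneg_left hk (by positivity : (0:ℝ) ≤ 2*((N:ℝ)-2))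
      have heq : 2*((N:ℝ)-2) * (m₂ * ((((N:ℝ)-2)⁻¹)/2 * (∫ t in R..x, t * Ψ j t)))
          = (∫ t in R..x, t * Ψ j t) * m₂ := by
        field_simp
      rw [heq] at h2
      linarith
    calc (∫ t in R..x, t * ∑ j, ψ j t) = ∑ j, ∫ t in R..x, t * ψ j t := hsum
    _ ≤ ∑ _j : Fin d, (2 * ((N:ℝ)-2) * B / m₂) := Finset.sum_le_sum (fun j _ => hterm j)
    _ = K := by
        rw [Finset.sum_const, Finset.card_univ, Fintype.card_fin, hK_def, nsmul_eq_mul]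
  have hFc : Continuous (fun t : ℝ => t * ∑ j, Ψ j t) :=
    continuous_id.mul (continuous_finset_sum _ (fun j _ => hΨ_cont j))
  have hIoc : ∀ a b : ℝ, 0 ≤ a → IntegrableOn (fun t : ℝ => t * ∑ j, ψ j t) (Ioc a b) := by
    intro a b ha
    apply (hFc.integrableOn_Ioc).congr_fun _ measurableSet_Ioc
    intro t ht
    have ht0 : (0:ℝ) ≤ t := le_trans ha ht.1.le
    show t * ∑ j, Ψ j t = t * ∑ j, ψ j t
    congr 1
    exact Finset.sum_congr rfl (fun j _ => hΨ_eq j t ht0)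
  have hint : IntegrableOn (fun t : ℝ => t * ∑ j, ψ j t) (Ioi 0) := by
    have h2 : IntegrableOn (fun t : ℝ => t * ∑ j, ψ j t) (Ioi R) := by
      apply MeasureTheory.integrableOn_Ioi_of_intervalIntegral_norm_bounded
        (l := (atTop : Filter ℕ)) (b := fun n : ℕ => R + n) K R
      · intro n; exact hIoc R (R + n) hR.le
      · exact tendsto_atTop_add_const_left atTop R tendsto_natCast_atTop_atTop
      · apply Filter.Eventually.of_forall
        intro n
        have hx : R ≤ R + n := le_add_of_nonneg_right (Nat.cast_nonneg n)
        have hnorm : (∫ t in R..(R + (n:ℝ)), ‖t * ∑ j, ψ j t‖)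
            = ∫ t in R..(R + (n:ℝ)), t * ∑ j, ψ j t := by
          apply intervalIntegral.integral_congr
          intro t ht
          rw [uIcc_of_le hx] at ht
          have ht0 : (0:ℝ) ≤ t := le_trans hR.le ht.1
          show ‖t * ∑ j, ψ j t‖ = t * ∑ j, ψ j t
          exact Real.norm_of_nonneg
            (mul_nonneg ht0 (Finset.sum_nonneg fun j _ => hψ_nonneg j t ht0))
        rw [hnorm]
        exact key2 (R + n) hx
    have h1 : IntegrableOn (fun t : ℝ => t * ∑ j, ψ j t) (Ioc 0 R) := hIoc 0 R le_rfl
    rw [show Ioi (0:ℝ) = Ioc 0 R ∪ Ioi R from (Ioc_union_Ioi_eq_Ioi hR.le).symm]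
    exact h1.union h2
  exact (hdiv hint).elim
end

section
/- Suppose (C1)–(C2) hold and p_1,…,p_d : [0,∞) → [0,∞) are continuous with ∫₀^∞ t^{1-N} ∫₀^t s^{N-1} p_j(s) ds dt = ∞ for every j = 1,…,d. Let (u_1,…,u_d) be nonnegative nondecreasing functions on [0,∞), not all identically zero, satisfying u_i(r) = u_i(0) + ∫₀^r t^{1-N} ∫₀^t s^{N-1} p_i(s) f_i(u_1(s),…,u_d(s)) ds dt for all r ≥ 0 and i = 1,…,d. Then u_i(r) → ∞ as r → ∞ for every i = 1,…,d. -/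
open MeasureTheory Set Filter

theorem stmt15
    (N d : ℕ) (hN : 3 ≤ N) (hd : 1 ≤ d)
    (f : Fin d → (Fin d → ℝ) → ℝ)
    -- (C1)
    (hf_nonneg : ∀ j v, (∀ i, 0 ≤ v i) → 0 ≤ f j v)
    (hC1 : ∀ j, ContDiffOn ℝ 1 (f j) {v : Fin d → ℝ | ∀ i, 0 ≤ v i})
    (hf0 : ∀ j, f j (fun _ => 0) = 0)
    (hfpos : ∀ j v, (∀ i, 0 ≤ v i) → (∃ i, 0 < v i) → 0 < f j v)
    -- (C2)
    (hC2 : ∀ j v w, (∀ i, 0 ≤ v i) → (∀ i, v i ≤ w i) → f j v ≤ f j w)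
    -- continuous nonnegative p₁,…,p_d with ∫₀^∞ t^{1-N} ∫₀^t s^{N-1} pⱼ(s) ds dt = ∞
    (p : Fin d → ℝ → ℝ)
    (hp_cont : ∀ i, ContinuousOn (p i) (Ici 0))
    (hp_nonneg : ∀ i, ∀ t ≥ (0:ℝ), 0 ≤ p i t)
    (hdiv : ∀ j, ¬ IntegrableOn
      (fun t : ℝ => (∫ s in (0:ℝ)..t, s ^ (N - 1) * p j s) / t ^ (N - 1)) (Ioi 0))
    -- (u₁,…,u_d) nonnegative nondecreasing, not all identically zero
    (u : Fin d → ℝ → ℝ)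
    (hu_nonneg : ∀ i, ∀ r ≥ (0:ℝ), 0 ≤ u i r)
    (hu_mono : ∀ i, MonotoneOn (u i) (Ici 0))
    (hu_nontriv : ∃ i, ∃ r ≥ (0:ℝ), u i r ≠ 0)
    -- the integral equation
    (hu_eq : ∀ i, ∀ r ≥ (0:ℝ),
      u i r = u i 0 +
        ∫ t in (0:ℝ)..r,
          (∫ s in (0:ℝ)..t, s ^ (N - 1) * (p i s * f i (fun j => u j s))) / t ^ (N - 1)) :
    -- conclusion: every uᵢ(r) → ∞ as r → ∞
    ∀ i, Tendsto (fun r => u i r) atTop atTop := by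
  intro i
  -- it suffices to show u i is unbounded
  suffices key : ∀ b : ℝ, ∃ r ≥ (0:ℝ), b ≤ u i r by
    rw [tendsto_atTop]
    intro b
    obtain ⟨r, hr0, hbr⟩ := key b
    filter_upwards [eventually_ge_atTop r] with x hx
    exact hbr.trans (hu_mono i (mem_Ici.2 hr0) (mem_Ici.2 (hr0.trans hx)) hx)
  by_contra hcon
  push_neg at hcon
  obtain ⟨M, hM⟩ := hcon
  set n := N - 1 with hn
  have hn2 : 2 ≤ n := by omega
  have hn0 : 0 < n := by omega
  obtain ⟨i0, r1, hr1, hne⟩ := hu_nontriv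
  have hr1pos : 0 < u i0 r1 := lt_of_le_of_ne (hu_nonneg i0 r1 hr1) (Ne.symm hne)
  set r0 : ℝ := max r1 1 with hr0def
  have hr0pos : (0:ℝ) < r0 := lt_max_of_lt_right one_pos
  have hr0nn : (0:ℝ) ≤ r0 := hr0pos.le
  have hc : 0 < u i0 r0 :=
    lt_of_lt_of_le hr1pos (hu_mono i0 (mem_Ici.2 hr1) (mem_Ici.2 hr0nn) (le_max_left r1 1))
  set c : ℝ := u i0 r0 with hcdef
  set v0 : Fin d → ℝ := fun j => if j = i0 then c else 0 with hv0
  have hv0nn : ∀ j, 0 ≤ v0 j := by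
    intro j; by_cases h : j = i0 <;> simp [hv0, h, hc.le]
  set m : ℝ := f i v0 with hmdef
  have hm : 0 < m := hfpos i v0 hv0nn ⟨i0, by simp [hv0, hc]⟩
  -- extended monotone versions of u
  set uE : Fin d → ℝ → ℝ := fun j s => u j (max s 0) with huEdef
  have huEmono : ∀ j, Monotone (uE j) := fun j a b hab =>
    hu_mono j (mem_Ici.2 (le_max_right a 0)) (mem_Ici.2 (le_max_right b 0))
      (max_le_max hab le_rfl)
  have huEnn : ∀ j s, 0 ≤ uE j s := fun j s => hu_nonneg j _ (le_max_right s 0)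
  have huEeq : ∀ j s, 0 ≤ s → uE j s = u j s := fun j s hs => by
    simp [huEdef, max_eq_left hs]
  set g : ℝ → ℝ := fun s => f i (fun j => uE j s) with hgdef
  have hgmono : Monotone g := fun a b hab =>
    hC2 i _ _ (fun j => huEnn j a) (fun j => huEmono j hab)
  have hgnn : ∀ s, 0 ≤ g s := fun s => hf_nonneg i _ (fun j => huEnn j s)
  have hgm : ∀ s, r0 ≤ s → m ≤ g s := by
    intro s hs
    refine hC2 i v0 _ hv0nn fun j => ?_
    by_cases h : j = i0
    · subst h
      simpa [hv0, huEdef, max_eq_left hr0nn] using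
        huEmono j (show r0 ≤ s from hs)
    · simpa [hv0, h] using huEnn j s
  set q : ℝ → ℝ := p i with hqdef
  set ker : ℝ → ℝ := fun s => s ^ n * q s with hkerdef
  set h1 : ℝ → ℝ := fun s => s ^ n * (q s * g s) with hh1def
  have hqnn : ∀ s, 0 ≤ s → 0 ≤ q s := fun s hs => hp_nonneg i s hs
  have hkernn : ∀ s, 0 ≤ s → 0 ≤ ker s := fun s hs =>
    mul_nonneg (pow_nonneg hs n) (hqnn s hs)
  have hh1nn : ∀ s, 0 ≤ s → 0 ≤ h1 s := fun s hs =>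
    mul_nonneg (pow_nonneg hs n) (mul_nonneg (hqnn s hs) (hgnn s))
  -- bounds for q on compacts
  have hqbdd : ∀ b : ℝ, 0 ≤ b → ∃ C : ℝ, 0 ≤ C ∧ ∀ s ∈ Icc (0:ℝ) b, |q s| ≤ C := by
    intro b hb
    obtain ⟨C, hC⟩ := isCompact_Icc.exists_bound_of_continuousOn
      ((hp_cont i).mono (Icc_subset_Ici_self))
    refine ⟨max C 0, le_max_right _ _, fun s hs => ?_⟩
    exact le_trans (hC s hs) (le_max_left _ _)
  -- integrability of ker and h1 on subintervals of [0,∞)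
  have hqaem : ∀ a b : ℝ, 0 ≤ a → AEMeasurable q (volume.restrict (Ioc a b)) := by
    intro a b ha
    exact ContinuousOn.aemeasurable ((hp_cont i).mono (fun x hx => le_trans ha hx.1.le))
      measurableSet_Ioc
  have hker_int : ∀ a b : ℝ, 0 ≤ a → a ≤ b → IntervalIntegrable ker volume a b := by
    intro a b ha hab
    rw [intervalIntegrable_iff_integrableOn_Ioc_of_le hab]
    obtain ⟨C, hC0, hC⟩ := hqbdd b (ha.trans hab)
    refine Integrable.mono' (g := fun _ => b ^ n * C)
      (integrableOn_const measure_Ioc_lt_top.ne)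
      (((measurable_id.pow_const n).aemeasurable.mul (hqaem a b ha)).aestronglyMeasurable)
      ?_
    · refine (ae_restrict_iff' measurableSet_Ioc).2 (Filter.Eventually.of_forall fun s hs => ?_)
      have hs0 : (0:ℝ) ≤ s := le_trans ha hs.1.le
      calc ‖ker s‖ = s ^ n * |q s| := by
            rw [hkerdef, Real.norm_eq_abs, abs_mul, abs_pow, abs_of_nonneg hs0]
        _ ≤ b ^ n * C :=
            mul_le_mul (pow_le_pow_left₀ hs0 hs.2 n) (hC s ⟨hs0, hs.2⟩) (abs_nonneg _)
              (pow_nonneg (hs0.trans hs.2) n)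
  have hh1_int : ∀ a b : ℝ, 0 ≤ a → a ≤ b → IntervalIntegrable h1 volume a b := by
    intro a b ha hab
    rw [intervalIntegrable_iff_integrableOn_Ioc_of_le hab]
    obtain ⟨C, hC0, hC⟩ := hqbdd b (ha.trans hab)
    refine Integrable.mono' (g := fun _ => b ^ n * (C * g b))
      (integrableOn_const measure_Ioc_lt_top.ne)
      (((measurable_id.pow_const n).aemeasurable.mul
        ((hqaem a b ha).mul hgmono.measurable.aemeasurable)).aestronglyMeasurable)
      ?_
    · refine (ae_restrict_iff' measurableSet_Ioc).2 (Filter.Eventually.of_forall fun s hs => ?_)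
      have hs0 : (0:ℝ) ≤ s := le_trans ha hs.1.le
      calc ‖h1 s‖ = s ^ n * (|q s| * g s) := by
            rw [hh1def, Real.norm_eq_abs, abs_mul, abs_mul, abs_pow, abs_of_nonneg hs0,
              abs_of_nonneg (hgnn s)]
        _ ≤ b ^ n * (C * g b) := by
            refine mul_le_mul (pow_le_pow_left₀ hs0 hs.2 n) ?_
              (mul_nonneg (abs_nonneg _) (hgnn s)) (pow_nonneg (hs0.trans hs.2) n)
            exact mul_le_mul (hC s ⟨hs0, hs.2⟩) (hgmono hs.2) (hgnn s) hC0
  -- primitives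
  set H : ℝ → ℝ := fun t => ∫ s in (0:ℝ)..(max t 0), h1 s with hHdef
  set Knum : ℝ → ℝ := fun t => ∫ s in (0:ℝ)..(max t 0), ker s with hKdef
  have hsplit : ∀ (φ : ℝ → ℝ), (∀ a b : ℝ, 0 ≤ a → a ≤ b → IntervalIntegrable φ volume a b) →
      ∀ a b : ℝ, 0 ≤ a → a ≤ b →
      (∫ s in (0:ℝ)..b, φ s) = (∫ s in (0:ℝ)..a, φ s) + ∫ s in a..b, φ s := by
    intro φ hφ a b ha hab
    exact (intervalIntegral.integral_add_adjacent_intervals (hφ 0 a le_rfl ha)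
      (hφ a b ha hab)).symm
  have hHmono : Monotone H := by
    intro t1 t2 h12
    have ha : (0:ℝ) ≤ max t1 0 := le_max_right _ _
    have hab : max t1 0 ≤ max t2 0 := max_le_max h12 le_rfl
    show (∫ s in (0:ℝ)..(max t1 0), h1 s) ≤ ∫ s in (0:ℝ)..(max t2 0), h1 s
    rw [hsplit h1 hh1_int (max t1 0) (max t2 0) ha hab]
    have : 0 ≤ ∫ s in (max t1 0)..(max t2 0), h1 s :=
      intervalIntegral.integral_nonneg hab (fun x hx => hh1nn x (ha.trans hx.1))
    linarith
  have hKmono : Monotone Knum := by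
    intro t1 t2 h12
    have ha : (0:ℝ) ≤ max t1 0 := le_max_right _ _
    have hab : max t1 0 ≤ max t2 0 := max_le_max h12 le_rfl
    show (∫ s in (0:ℝ)..(max t1 0), ker s) ≤ ∫ s in (0:ℝ)..(max t2 0), ker s
    rw [hsplit ker hker_int (max t1 0) (max t2 0) ha hab]
    have : 0 ≤ ∫ s in (max t1 0)..(max t2 0), ker s :=
      intervalIntegral.integral_nonneg hab (fun x hx => hkernn x (ha.trans hx.1))
    linarith
  have hHnn : ∀ t, 0 ≤ H t := fun t =>
    intervalIntegral.integral_nonneg (le_max_right t 0) (fun x hx => hh1nn x hx.1)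
  have hKnn : ∀ t, 0 ≤ Knum t := fun t =>
    intervalIntegral.integral_nonneg (le_max_right t 0) (fun x hx => hkernn x hx.1)
  set Φ : ℝ → ℝ := fun t => H t / t ^ n with hΦdef
  have hΦmeas : Measurable Φ := hHmono.measurable.div (measurable_id.pow_const n)
  have hΦnn : ∀ t, 0 ≤ t → 0 ≤ Φ t := fun t ht =>
    div_nonneg (hHnn t) (pow_nonneg ht n)
  -- the integrand in the equation coincides with Φ on [0,∞)
  have hFΦ : ∀ t : ℝ, 0 ≤ t →
      (∫ s in (0:ℝ)..t, s ^ n * (p i s * f i fun j => u j s)) / t ^ n = Φ t := by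
    intro t ht
    have h1' : (∫ s in (0:ℝ)..t, s ^ n * (p i s * f i fun j => u j s))
        = ∫ s in (0:ℝ)..t, h1 s := by
      refine intervalIntegral.integral_congr fun s hs => ?_
      rw [uIcc_of_le ht] at hs
      have hus : (fun j => u j s) = fun j => uE j s := funext fun j => (huEeq j s hs.1).symm
      show s ^ n * (p i s * f i fun j => u j s) = s ^ n * (q s * g s)
      rw [hus]
    rw [h1']
    show _ = (∫ s in (0:ℝ)..(max t 0), h1 s) / t ^ n
    rw [max_eq_left ht]
  have hint_bound : ∀ r : ℝ, 0 ≤ r → (∫ t in (0:ℝ)..r, Φ t) ≤ M := by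
    intro r hr
    have he := hu_eq i r hr
    have hco : (∫ t in (0:ℝ)..r,
        (∫ s in (0:ℝ)..t, s ^ n * (p i s * f i fun j => u j s)) / t ^ n)
        = ∫ t in (0:ℝ)..r, Φ t := by
      refine intervalIntegral.integral_congr fun t htt => ?_
      rw [uIcc_of_le hr] at htt
      exact hFΦ t htt.1
    rw [hco] at he
    have h0 : 0 ≤ u i 0 := hu_nonneg i 0 le_rfl
    have := hM r hr
    linarith
  -- integrability of Φ on bounded intervals
  have hΦint_Ioc : ∀ b : ℝ, 0 ≤ b → IntegrableOn Φ (Ioc 0 b) := by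
    intro b hb
    obtain ⟨C, hC0, hC⟩ := hqbdd b hb
    have hD : 0 ≤ C * g b := mul_nonneg hC0 (hgnn b)
    refine Integrable.mono' (g := fun _ => C * g b * b)
      (integrableOn_const measure_Ioc_lt_top.ne)
      hΦmeas.aestronglyMeasurable ?_
    refine (ae_restrict_iff' measurableSet_Ioc).2 (Filter.Eventually.of_forall fun t ht => ?_)
    have ht0 : 0 < t := ht.1
    have htn : 0 < t ^ n := pow_pos ht0 n
    have hHle : H t ≤ (t - 0) * (t ^ n * (C * g b)) := by
      have e : H t = ∫ s in (0:ℝ)..t, h1 s := by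
        show (∫ s in (0:ℝ)..(max t 0), h1 s) = _
        rw [max_eq_left ht0.le]
      rw [e]
      have hmono := intervalIntegral.integral_mono_on ht0.le (hh1_int 0 t le_rfl ht0.le)
        (intervalIntegrable_const (c := t ^ n * (C * g b))) (fun s hs => ?_)
      · rw [intervalIntegral.integral_const, smul_eq_mul] at hmono
        exact hmono
      · have hs0 : 0 ≤ s := hs.1
        show s ^ n * (q s * g s) ≤ _
        refine mul_le_mul (pow_le_pow_left₀ hs0 hs.2 n) ?_
          (mul_nonneg (hqnn s hs0) (hgnn s)) (pow_nonneg (hs0.trans hs.2) n)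
        refine mul_le_mul (le_trans (le_abs_self _) (hC s ⟨hs0, hs.2.trans ht.2⟩))
          (hgmono (hs.2.trans ht.2)) (hgnn s) hC0
    rw [Real.norm_of_nonneg (hΦnn t ht0.le)]
    rw [div_le_iff₀ htn]
    calc H t ≤ (t - 0) * (t ^ n * (C * g b)) := hHle
      _ = C * g b * t ^ n * t := by ring
      _ ≤ C * g b * t ^ n * b := by
          exact mul_le_mul_of_nonneg_left ht.2 (mul_nonneg hD htn.le)
      _ = C * g b * b * t ^ n := by ring
  have hΦint : IntegrableOn Φ (Ioi 0) := by
    refine integrableOn_Ioi_of_intervalIntegral_norm_bounded M 0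
      (fun k : ℕ => hΦint_Ioc k (Nat.cast_nonneg k)) tendsto_natCast_atTop_atTop ?_
    refine Filter.Eventually.of_forall fun k => ?_
    have e : (∫ t in (0:ℝ)..(k:ℝ), ‖Φ t‖) = ∫ t in (0:ℝ)..(k:ℝ), Φ t := by
      refine intervalIntegral.integral_congr fun t htt => ?_
      rw [uIcc_of_le (Nat.cast_nonneg k)] at htt
      exact Real.norm_of_nonneg (hΦnn t htt.1)
    rw [e]; exact hint_bound _ (Nat.cast_nonneg k)
  -- the key comparison
  have hkey : ∀ t : ℝ, r0 ≤ t → Knum t ≤ H t / m + Knum r0 := by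
    intro t ht
    have ht0 : (0:ℝ) ≤ t := hr0nn.trans ht
    have e1 : H t = (∫ s in (0:ℝ)..r0, h1 s) + ∫ s in r0..t, h1 s := by
      show (∫ s in (0:ℝ)..(max t 0), h1 s) = _
      rw [max_eq_left ht0]; exact hsplit h1 hh1_int r0 t hr0nn ht
    have e2 : Knum t = Knum r0 + ∫ s in r0..t, ker s := by
      show (∫ s in (0:ℝ)..(max t 0), ker s)
          = (∫ s in (0:ℝ)..(max r0 0), ker s) + ∫ s in r0..t, ker s
      rw [max_eq_left ht0, max_eq_left hr0nn]
      exact hsplit ker hker_int r0 t hr0nn ht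
    have e3 : m * (∫ s in r0..t, ker s) ≤ ∫ s in r0..t, h1 s := by
      have hmm : (∫ s in r0..t, m * ker s) ≤ ∫ s in r0..t, h1 s := by
        refine intervalIntegral.integral_mono_on ht
          ((hker_int r0 t hr0nn ht).const_mul m) (hh1_int r0 t hr0nn ht) fun s hs => ?_
        have hs0 : (0:ℝ) ≤ s := hr0nn.trans hs.1
        have e4 : h1 s = ker s * g s := by
          show s ^ n * (q s * g s) = s ^ n * q s * g s; ring
        rw [e4]
        calc m * ker s = ker s * m := mul_comm _ _
          _ ≤ ker s * g s := mul_le_mul_of_nonneg_left (hgm s hs.1) (hkernn s hs0)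
      simpa [intervalIntegral.integral_const_mul] using hmm
    have h01 : 0 ≤ ∫ s in (0:ℝ)..r0, h1 s :=
      intervalIntegral.integral_nonneg hr0nn fun s hs => hh1nn s hs.1
    have hfin : m * (Knum t - Knum r0) ≤ H t := by
      rw [e1]
      have : (∫ s in r0..t, ker s) = Knum t - Knum r0 := by rw [e2]; ring
      rw [← this]; linarith
    have := (le_div_iff₀ hm).2 (by linarith : (Knum t - Knum r0) * m ≤ H t)
    linarith
  -- integrability of the kernel function Ψ
  set Ψ : ℝ → ℝ := fun t => Knum t / t ^ n with hΨdef
  have hΨmeas : Measurable Ψ := hKmono.measurable.div (measurable_id.pow_const n)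
  have hΨnn : ∀ t, 0 ≤ t → 0 ≤ Ψ t := fun t ht =>
    div_nonneg (hKnn t) (pow_nonneg ht n)
  have hΨint_Ioc : IntegrableOn Ψ (Ioc 0 r0) := by
    obtain ⟨C, hC0, hC⟩ := hqbdd r0 hr0nn
    refine Integrable.mono' (g := fun _ => C * r0)
      (integrableOn_const measure_Ioc_lt_top.ne)
      hΨmeas.aestronglyMeasurable ?_
    refine (ae_restrict_iff' measurableSet_Ioc).2 (Filter.Eventually.of_forall fun t ht => ?_)
    have ht0 : 0 < t := ht.1
    have htn : 0 < t ^ n := pow_pos ht0 n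
    have hKle : Knum t ≤ (t - 0) * (t ^ n * C) := by
      have e : Knum t = ∫ s in (0:ℝ)..t, ker s := by
        show (∫ s in (0:ℝ)..(max t 0), ker s) = _
        rw [max_eq_left ht0.le]
      rw [e]
      have hmono := intervalIntegral.integral_mono_on ht0.le (hker_int 0 t le_rfl ht0.le)
        (intervalIntegrable_const (c := t ^ n * C)) (fun s hs => ?_)
      · rw [intervalIntegral.integral_const, smul_eq_mul] at hmono
        exact hmono
      · have hs0 : 0 ≤ s := hs.1
        show s ^ n * q s ≤ _
        exact mul_le_mul (pow_le_pow_left₀ hs0 hs.2 n)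
          (le_trans (le_abs_self _) (hC s ⟨hs0, hs.2.trans ht.2⟩))
          (hqnn s hs0) (pow_nonneg (hs0.trans hs.2) n)
    rw [Real.norm_of_nonneg (hΨnn t ht0.le)]
    rw [div_le_iff₀ htn]
    calc Knum t ≤ (t - 0) * (t ^ n * C) := hKle
      _ = C * t ^ n * t := by ring
      _ ≤ C * t ^ n * r0 := mul_le_mul_of_nonneg_left ht.2 (mul_nonneg hC0 htn.le)
      _ = C * r0 * t ^ n := by ring
  have hnR : (-(n:ℝ)) < -1 := by
    have : (1:ℝ) < (n:ℝ) := by exact_mod_cast hn2.trans_lt' one_lt_two |>.trans_le le_rfl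
    linarith
  have hrpow : IntegrableOn (fun t : ℝ => t ^ (-(n:ℝ))) (Ioi r0) :=
    integrableOn_Ioi_rpow_of_lt hnR hr0pos
  have hbound_int : IntegrableOn (fun t => Φ t / m + Knum r0 * t ^ (-(n:ℝ))) (Ioi r0) :=
    ((hΦint.mono_set (Ioi_subset_Ioi hr0nn)).div_const m).add (hrpow.const_mul _)
  have hΨint_Ioi : IntegrableOn Ψ (Ioi r0) := by
    refine Integrable.mono' hbound_int hΨmeas.aestronglyMeasurable ?_
    refine (ae_restrict_iff' measurableSet_Ioi).2 (Filter.Eventually.of_forall fun t ht => ?_)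
    have ht0 : 0 < t := hr0pos.trans ht
    have htn : 0 < t ^ n := pow_pos ht0 n
    rw [Real.norm_of_nonneg (hΨnn t ht0.le)]
    have hk := hkey t (le_of_lt ht)
    have e5 : t ^ (-(n:ℝ)) = (t ^ n)⁻¹ := by
      rw [Real.rpow_neg ht0.le, Real.rpow_natCast]
    show Knum t / t ^ n ≤ Φ t / m + Knum r0 * t ^ (-(n:ℝ))
    rw [e5]
    have hdd : Knum t / t ^ n ≤ (H t / m + Knum r0) / t ^ n := by gcongr
    refine hdd.trans (le_of_eq ?_)
    show (H t / m + Knum r0) / t ^ n = (H t / t ^ n) / m + Knum r0 * (t ^ n)⁻¹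
    field_simp
  have hΨint : IntegrableOn Ψ (Ioi 0) := by
    rw [← Ioc_union_Ioi_eq_Ioi hr0nn]
    exact hΨint_Ioc.union hΨint_Ioi
  refine hdiv i (hΨint.congr_fun (fun t ht => ?_) measurableSet_Ioi)
  show Knum t / t ^ n = (∫ s in (0:ℝ)..t, s ^ n * p i s) / t ^ n
  have : (Knum t) = ∫ s in (0:ℝ)..t, s ^ n * p i s := by
    show (∫ s in (0:ℝ)..(max t 0), ker s) = _
    rw [max_eq_left (le_of_lt ht)]
  rw [this]
end
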